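/- Let a₁ be a complex constant, set α = −8, β = −4(a₁ − 1), and let U ⊆ ℂ be an open set not containing 0. Suppose x, y : ℂ → ℂ are differentiable on U, satisfy the Filipuk–Żołądek system x'(t) = x² y/t and y'(t) = α − x y²/t + β/x² − 4 t/x³ (i.e. the case γ = 0, δ = −4) on U, and x(t) ≠ 0 on U. Suppose q, p : ℂ → ℂ are differentiable functions with q(t²) = t x(t) and p(t²) = (x(t)² y(t) − 2 a₁ x(t) + x(t) − 2t)/(4 t x(t)²) for all t ∈ U. Then for all s = t² with t ∈ U, q and p satisfy the Hamiltonian system associated to the degenerate (surface type D₇⁽¹⁾) KNY Hamiltonian K₁(q,p,s) = (q² p² + q + p s + a₁ q p)/s, namely q'(s) = (2 q² p + s + a₁ q)/s and p'(s) = −(2 q p² + 1 + a₁ p)/s. -/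

import Mathlib

set_option maxHeartbeats 1000000



private theorem FZ_KNY_keyIdentity (X T Y A : ℂ) (hX : X ≠ 0) (hT : T ≠ 0) :
    ((2*X*(X^2*Y/T)*Y + X^2*((-8:ℂ) - X*Y^2/T + (-4*(A-1))/X^2 - 4*T/X^3)
        - 2*A*(X^2*Y/T) + X^2*Y/T - 2) * (4*T*X^2)
      - (X^2*Y - 2*A*X + X - 2*T)*(4*X^2 + 4*T*(2*X*(X^2*Y/T)))) / (4*T*X^2)^2 / (2*T)
    = -((2*(T*X)*((X^2*Y - 2*A*X + X - 2*T)/(4*T*X^2))^2 + 1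
        + A*((X^2*Y-2*A*X+X-2*T)/(4*T*X^2)))/T^2) := by
  have hX2 : X ^ 2 ≠ 0 := pow_ne_zero 2 hX
  have hX3 : X ^ 3 ≠ 0 := pow_ne_zero 3 hX
  have hT2 : T ^ 2 ≠ 0 := pow_ne_zero 2 hT
  have h1 : T * X ^ 2 * X ^ 3 ≠ 0 := mul_ne_zero (mul_ne_zero hT hX2) hX3
  have h2 : T * (T * X ^ 2 * X ^ 3) ≠ 0 := mul_ne_zero hT h1
  have h3 : (4:ℂ) * T * X ^ 2 ≠ 0 := mul_ne_zero (mul_ne_zero (by norm_num) hT) hX2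
  have h4 : ((4:ℂ) * T * X ^ 2) ^ 2 ≠ 0 := pow_ne_zero 2 h3
  have h5 : ((4:ℂ) * T * X ^ 2) ^ 2 * (2 * T) ≠ 0 :=
    mul_ne_zero h4 (mul_ne_zero two_ne_zero hT)
  have h6 : T * X ^ 2 * X ^ 3 * ((4:ℂ) * T * X ^ 2) ^ 2 ≠ 0 := mul_ne_zero h1 h4
  have h7 : T * (T * X ^ 2 * X ^ 3 * ((4:ℂ) * T * X ^ 2) ^ 2) ≠ 0 := mul_ne_zero hT h6
  have h8 : T * X ^ 2 * X ^ 3 * ((4:ℂ) * T * X ^ 2) ^ 2 * (2 * T) ≠ 0 :=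
    mul_ne_zero h6 (mul_ne_zero two_ne_zero hT)
  have h9 : T * (T * X ^ 2 * X ^ 3) * T * T * T * ((4:ℂ) * T * X ^ 2) ^ 2 * (2 * T) ≠ 0 := by
    apply_rules [mul_ne_zero, pow_ne_zero, two_ne_zero]
  field_simp
  ring

/-- Under `s = t²`, `q(t²) = t x(t)`,
`p(t²) = (x²y − 2a₁x + x − 2t)/(4tx²)`, solutions of the Filipuk–Żołądek system
with `α = −8`, `β = −4(a₁ − 1)`, `γ = 0`, `δ = −4` are mapped to solutions of the
system with degenerate (surface type `D₇⁽¹⁾`) KNY Hamiltonian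
`K₁ = (q²p² + q + ps + a₁qp)/s`. -/
theorem FZ_to_degenerate_KNY_D7 (a₁ : ℂ)
    (α β : ℂ) (hα : α = -8) (hβ : β = -4 * (a₁ - 1))
    (U : Set ℂ) (hU : IsOpen U) (hU0 : (0 : ℂ) ∉ U) (x y : ℂ → ℂ)
    (hx : ∀ t ∈ U, HasDerivAt x ((x t) ^ 2 * y t / t) t)
    (hy : ∀ t ∈ U, HasDerivAt y
      (α - x t * (y t) ^ 2 / t + β / (x t) ^ 2 - 4 * t / (x t) ^ 3) t)
    (hxne : ∀ t ∈ U, x t ≠ 0)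
    (q p : ℂ → ℂ)
    (hqd : ∀ t ∈ U, DifferentiableAt ℂ q (t ^ 2))
    (hpd : ∀ t ∈ U, DifferentiableAt ℂ p (t ^ 2))
    (hq : ∀ t ∈ U, q (t ^ 2) = t * x t)
    (hp : ∀ t ∈ U, p (t ^ 2) =
      ((x t) ^ 2 * y t - 2 * a₁ * x t + x t - 2 * t) / (4 * t * (x t) ^ 2)) :
    ∀ t ∈ U, ∀ s, s = t ^ 2 →
      HasDerivAt q ((2 * (q s) ^ 2 * p s + s + a₁ * q s) / s) s ∧
      HasDerivAt p (-((2 * q s * (p s) ^ 2 + 1 + a₁ * p s) / s)) s := by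
  intro t ht s hs
  subst hs
  have htne : t ≠ 0 := fun h => hU0 (h ▸ ht)
  have hxt : x t ≠ 0 := hxne t ht
  have hxD := hx t ht
  have hyD := hy t ht
  have h2t : (2 : ℂ) * t ≠ 0 := mul_ne_zero two_ne_zero htne
  have hsq : HasDerivAt (fun u : ℂ => u ^ 2) (2 * t) t := by
    simpa using hasDerivAt_pow 2 t
  -- q part
  have hqc : HasDerivAt (fun u => q (u ^ 2)) (deriv q (t ^ 2) * (2 * t)) t :=
    ((hqd t ht).hasDerivAt).comp t hsq
  have hqxg : HasDerivAt (fun u => u * x u)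
      (1 * x t + t * ((x t) ^ 2 * y t / t)) t :=
    (hasDerivAt_id t).mul hxD
  have hqeq : (fun u => u * x u) =ᶠ[nhds t] (fun u => q (u ^ 2)) := by
    filter_upwards [hU.mem_nhds ht] with u hu using (hq u hu).symm
  have hqc' : HasDerivAt (fun u => u * x u) (deriv q (t ^ 2) * (2 * t)) t :=
    hqc.congr_of_eventuallyEq hqeq
  have hqval : deriv q (t ^ 2) * (2 * t) = 1 * x t + t * ((x t) ^ 2 * y t / t) :=
    hqc'.unique hqxg
  have hdq : deriv q (t ^ 2) =
      (1 * x t + t * ((x t) ^ 2 * y t / t)) / (2 * t) :=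
    (eq_div_iff h2t).mpr hqval
  have hdq' : deriv q (t ^ 2) =
      (2 * (q (t ^ 2)) ^ 2 * p (t ^ 2) + t ^ 2 + a₁ * q (t ^ 2)) / t ^ 2 := by
    rw [hdq, hq t ht, hp t ht]
    field_simp
    ring
  -- p part
  have hxsq : HasDerivAt (fun u => (x u) ^ 2)
      (2 * x t * ((x t) ^ 2 * y t / t)) t := by
    simpa using hxD.fun_pow 2
  have hN : HasDerivAt
      (fun u => (x u) ^ 2 * y u - 2 * a₁ * x u + x u - 2 * u)
      ((2 * x t * ((x t) ^ 2 * y t / t) * y t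
          + (x t) ^ 2 * (α - x t * (y t) ^ 2 / t + β / (x t) ^ 2 - 4 * t / (x t) ^ 3)
        - 2 * a₁ * ((x t) ^ 2 * y t / t)
        + (x t) ^ 2 * y t / t) - 2) t := by
    exact (((hxsq.mul hyD).sub ((hxD.const_mul (2 * a₁)))).add hxD).sub
      (by simpa using (hasDerivAt_id t).const_mul (2 : ℂ))
  have hDen : HasDerivAt (fun u => 4 * u * (x u) ^ 2)
      (4 * (x t) ^ 2 + 4 * t * (2 * x t * ((x t) ^ 2 * y t / t))) t := by
    have h4 : HasDerivAt (fun u : ℂ => 4 * u) 4 t := by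
      simpa using (hasDerivAt_id t).const_mul (4 : ℂ)
    simpa [mul_comm] using h4.fun_mul hxsq
  have hDne : 4 * t * (x t) ^ 2 ≠ 0 :=
    mul_ne_zero (mul_ne_zero (by norm_num : (4:ℂ) ≠ 0) htne) (pow_ne_zero 2 hxt)
  have hH : HasDerivAt
      (fun u => ((x u) ^ 2 * y u - 2 * a₁ * x u + x u - 2 * u) / (4 * u * (x u) ^ 2))
      ((((2 * x t * ((x t) ^ 2 * y t / t) * y t
          + (x t) ^ 2 * (α - x t * (y t) ^ 2 / t + β / (x t) ^ 2 - 4 * t / (x t) ^ 3)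
        - 2 * a₁ * ((x t) ^ 2 * y t / t)
        + (x t) ^ 2 * y t / t) - 2) * (4 * t * (x t) ^ 2)
        - ((x t) ^ 2 * y t - 2 * a₁ * x t + x t - 2 * t)
          * (4 * (x t) ^ 2 + 4 * t * (2 * x t * ((x t) ^ 2 * y t / t))))
        / (4 * t * (x t) ^ 2) ^ 2) t :=
    hN.div hDen hDne
  have hpc : HasDerivAt (fun u => p (u ^ 2)) (deriv p (t ^ 2) * (2 * t)) t :=
    ((hpd t ht).hasDerivAt).comp t hsq
  have hpeq : (fun u => ((x u) ^ 2 * y u - 2 * a₁ * x u + x u - 2 * u)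
      / (4 * u * (x u) ^ 2)) =ᶠ[nhds t] (fun u => p (u ^ 2)) := by
    filter_upwards [hU.mem_nhds ht] with u hu using (hp u hu).symm
  have hpc' := hpc.congr_of_eventuallyEq hpeq
  have hpval := hpc'.unique hH
  have hdp : deriv p (t ^ 2) =
      ((((2 * x t * ((x t) ^ 2 * y t / t) * y t
          + (x t) ^ 2 * (α - x t * (y t) ^ 2 / t + β / (x t) ^ 2 - 4 * t / (x t) ^ 3)
        - 2 * a₁ * ((x t) ^ 2 * y t / t)
        + (x t) ^ 2 * y t / t) - 2) * (4 * t * (x t) ^ 2)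
        - ((x t) ^ 2 * y t - 2 * a₁ * x t + x t - 2 * t)
          * (4 * (x t) ^ 2 + 4 * t * (2 * x t * ((x t) ^ 2 * y t / t))))
        / (4 * t * (x t) ^ 2) ^ 2) / (2 * t) :=
    (eq_div_iff h2t).mpr hpval
  have hdp' : deriv p (t ^ 2) =
      -((2 * q (t ^ 2) * (p (t ^ 2)) ^ 2 + 1 + a₁ * p (t ^ 2)) / t ^ 2) := by
    rw [hdp, hq t ht, hp t ht, hα, hβ]
    exact FZ_KNY_keyIdentity (x t) t (y t) a₁ hxt htne
  exact ⟨hdq' ▸ (hqd t ht).hasDerivAt, hdp' ▸ (hpd t ht).hasDerivAt⟩
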